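/- Under the setting of the previous derivative formula — g > 0; constants u_m, h_m, u₊, h₊ > 0 and a₀, a₁ ∈ ℝ; differentiable functions h₀(h₁) > 0, u₀(h₁), u₁(h₁) on an open interval I ⊂ (0, ∞) satisfying u₀ = u_m + 2√g(√h₀ − √h_m), h₀u₀ = h₁u₁, and u₀²/2 + g(h₀ + a₀) = u₁²/2 + g(h₁ + a₁) — define f(h₁) = u₁(h₁) − (u₊ + 2√g(√h₁ − √h₊)). Then at every h₁ ∈ I where √(h₀)u₁ − √g h₁ ≠ 0, f'(h₁) = √(g/h₁) · (u₁ + √(g h₁))(√h₁ − √h₀) / (u₁ √h₀ − √g h₁). -/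

import Mathlib

/-- Derivative of the gap `f(h₁) = u₁(h₁) − (u₊ + 2√g(√h₁ − √h₊))` between the
transmitted stationary curve `S₀(U₁,U₀)` and the 2-rarefaction curve through
`(u₊,h₊)`: under the relations `u₀ = u_m + 2√g(√h₀ − √h_m)`, `h₀u₀ = h₁u₁`,
`u₀²/2 + g(h₀+a₀) = u₁²/2 + g(h₁+a₁)` on an open interval `I ⊂ (0,∞)`, at each
point with `√(h₀)u₁ − √g·h₁ ≠ 0`,
`f'(h₁) = √(g/h₁)·(u₁ + √(gh₁))(√h₁ − √h₀)/(u₁√h₀ − √g·h₁)`. -/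
theorem stmt_14 (g um hm up hp a₀ a₁ lo hi : ℝ) (hg : 0 < g) (hum : 0 < um)
    (hhm : 0 < hm) (hup : 0 < up) (hhp : 0 < hp) (hlo : 0 ≤ lo)
    (h₀ u₀ u₁ : ℝ → ℝ)
    (hdiff : ∀ x ∈ Set.Ioo lo hi, DifferentiableAt ℝ h₀ x
      ∧ DifferentiableAt ℝ u₀ x ∧ DifferentiableAt ℝ u₁ x)
    (hpos : ∀ x ∈ Set.Ioo lo hi, 0 < h₀ x)
    (hrar : ∀ x ∈ Set.Ioo lo hi,
      u₀ x = um + 2 * Real.sqrt g * (Real.sqrt (h₀ x) - Real.sqrt hm))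
    (hmass : ∀ x ∈ Set.Ioo lo hi, h₀ x * u₀ x = x * u₁ x)
    (hener : ∀ x ∈ Set.Ioo lo hi,
      (u₀ x) ^ 2 / 2 + g * (h₀ x + a₀) = (u₁ x) ^ 2 / 2 + g * (x + a₁)) :
    ∀ x ∈ Set.Ioo lo hi,
      Real.sqrt (h₀ x) * u₁ x - Real.sqrt g * x ≠ 0 →
        deriv (fun y : ℝ =>
            u₁ y - (up + 2 * Real.sqrt g * (Real.sqrt y - Real.sqrt hp))) x
          = Real.sqrt (g / x) *
              ((u₁ x + Real.sqrt (g * x)) * (Real.sqrt x - Real.sqrt (h₀ x))) /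
              (u₁ x * Real.sqrt (h₀ x) - Real.sqrt g * x) := by
  intro x hx hne
  obtain ⟨hd0, hdu0, hdu1⟩ := hdiff x hx
  have hx0 : 0 < x := lt_of_le_of_lt hlo hx.1
  have H0 : 0 < h₀ x := hpos x hx
  set s0 := Real.sqrt (h₀ x) with hs0def
  set sx := Real.sqrt x with hsxdef
  set sg := Real.sqrt g with hsgdef
  have hs0 : 0 < s0 := Real.sqrt_pos.mpr H0
  have hsx : 0 < sx := Real.sqrt_pos.mpr hx0
  have hsg : 0 < sg := Real.sqrt_pos.mpr hg
  have hs0sq : s0 ^ 2 = h₀ x := Real.sq_sqrt H0.le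
  have hsxsq : sx ^ 2 = x := Real.sq_sqrt hx0.le
  have hsgsq : sg ^ 2 = g := Real.sq_sqrt hg.le
  set d0 := deriv h₀ x with hd0def
  set dU0 := deriv u₀ x with hdU0def
  set dU1 := deriv u₁ x with hdU1def
  have Hh0 : HasDerivAt h₀ d0 x := hd0.hasDerivAt
  have Hu0 : HasDerivAt u₀ dU0 x := hdu0.hasDerivAt
  have Hu1 : HasDerivAt u₁ dU1 x := hdu1.hasDerivAt
  have hmem : Set.Ioo lo hi ∈ nhds x := isOpen_Ioo.mem_nhds hx
  -- derivative of sqrt ∘ h₀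
  have Hsq : HasDerivAt (fun y => Real.sqrt (h₀ y)) (d0 / (2 * s0)) x := by
    have h := (Real.hasDerivAt_sqrt H0.ne').comp x Hh0
    refine h.congr_deriv ?_
    rw [← hs0def]
    ring
  -- E1 from the rarefaction relation
  have HR : HasDerivAt (fun y => um + 2 * sg * (Real.sqrt (h₀ y) - Real.sqrt hm))
      (2 * sg * (d0 / (2 * s0))) x :=
    ((Hsq.sub_const (Real.sqrt hm)).const_mul (2 * sg)).const_add um
  have HU0' : HasDerivAt u₀ (2 * sg * (d0 / (2 * s0))) x :=
    HR.congr_of_eventuallyEq (by filter_upwards [hmem] with y hy using hrar y hy)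
  have E1 : dU0 * s0 = sg * d0 := by
    have h := Hu0.unique HU0'
    field_simp at h
    linarith
  -- E2 from mass conservation
  have HL2 : HasDerivAt (fun y => h₀ y * u₀ y) (d0 * u₀ x + h₀ x * dU0) x := Hh0.mul Hu0
  have HR2 : HasDerivAt (fun y => y * u₁ y) (1 * u₁ x + x * dU1) x := (hasDerivAt_id x).mul Hu1
  have E2 : d0 * u₀ x + h₀ x * dU0 = u₁ x + x * dU1 := by
    have h := HL2.unique (HR2.congr_of_eventuallyEq
      (by filter_upwards [hmem] with y hy using hmass y hy))
    linarith
  -- E3 from energy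
  have HL3 : HasDerivAt (fun y => (u₀ y) ^ 2 / 2 + g * (h₀ y + a₀)) (u₀ x * dU0 + g * d0) x := by
    have h := ((Hu0.pow 2).div_const 2).add ((Hh0.add_const a₀).const_mul g)
    refine h.congr_deriv ?_
    ring
  have HR3 : HasDerivAt (fun y => (u₁ y) ^ 2 / 2 + g * (y + a₁)) (u₁ x * dU1 + g) x := by
    have h := ((Hu1.pow 2).div_const 2).add (((hasDerivAt_id x).add_const a₁).const_mul g)
    refine h.congr_deriv ?_
    ring
  have E3 : u₀ x * dU0 + g * d0 = u₁ x * dU1 + g := by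
    have h := HL3.unique (HR3.congr_of_eventuallyEq
      (by filter_upwards [hmem] with y hy using hener y hy))
    linarith
  -- key relation for dU1
  have key : dU1 * (u₁ x * s0 - sg * x) = sg * u₁ x - g * s0 := by
    linear_combination (-s0) * E3 + sg * E2 + (u₀ x - sg * s0) * E1 - s0 * d0 * hsgsq +
      sg * dU0 * hs0sq
  -- derivative of f
  have Hf : HasDerivAt (fun y : ℝ => u₁ y - (up + 2 * sg * (Real.sqrt y - Real.sqrt hp)))
      (dU1 - 2 * sg * (1 / (2 * sx))) x := by
    have hs : HasDerivAt Real.sqrt (1 / (2 * sx)) x := Real.hasDerivAt_sqrt hx0.ne'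
    exact Hu1.sub (((hs.sub_const (Real.sqrt hp)).const_mul (2 * sg)).const_add up)
  rw [Hf.deriv, Real.sqrt_div hg.le, Real.sqrt_mul hg.le]
  have hden : u₁ x * s0 - sg * x ≠ 0 := fun h => hne (by linarith [h])
  field_simp
  linear_combination sx ^ 2 * key + sx ^ 2 * s0 * hsgsq - sx * sg ^ 2 * hsxsq
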